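/- arXiv:2411.18004 — 4 statements merged into one kernel-verified Lean document; each statement's English description precedes it below -/
import Mathlib

section
/- Let n ≥ 1 and let u, v ∈ ℝⁿ (with the Euclidean norm). Let 0 < ρ_min ≤ ρ̃ and ρ̃ ≤ ρ_max. Suppose ρ̃ ≤ ‖u‖ ≤ ρ_max, ρ̃ ≤ ‖v‖ ≤ ρ_max, and ‖v − u‖ ≤ 2·√(ρ̃² − ρ_min²). Then for every t ∈ [0, 1], ρ_min ≤ ‖(1 − t)·u + t·v‖ ≤ ρ_max. (Paper's Lemma on LCvx along edges: if LCvx with the perturbed lower bound ρ̃ holds at both endpoints of an edge and the rate constraint ‖u_{i+1} − u_i‖ ≤ δ(ρ̃) = 2√(ρ̃² − ρ_min²) holds, then ρ_min ≤ ‖u(t)‖ ≤ ρ_max along the whole linearly interpolated edge.) -/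
/-- Edge LCvx lemma: if the perturbed bounds hold at both endpoints of an edge and
the rate constraint `‖v - u‖ ≤ 2√(ρ̃² − ρ_min²)` holds, then
`ρ_min ≤ ‖u(t)‖ ≤ ρ_max` along the whole linearly interpolated edge. -/
theorem stmt_0 (n : ℕ) (hn : 1 ≤ n) (u v : EuclideanSpace ℝ (Fin n))
    (ρmin ρt ρmax : ℝ) (hρ0 : 0 < ρmin) (hρ1 : ρmin ≤ ρt) (hρ2 : ρt ≤ ρmax)
    (hu1 : ρt ≤ ‖u‖) (hu2 : ‖u‖ ≤ ρmax)
    (hv1 : ρt ≤ ‖v‖) (hv2 : ‖v‖ ≤ ρmax)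
    (hrate : ‖v - u‖ ≤ 2 * Real.sqrt (ρt ^ 2 - ρmin ^ 2)) :
    ∀ t ∈ Set.Icc (0 : ℝ) 1,
      ρmin ≤ ‖(1 - t) • u + t • v‖ ∧ ‖(1 - t) • u + t • v‖ ≤ ρmax := by
  intro t ht
  obtain ⟨ht0, ht1⟩ := ht
  have ht1' : (0:ℝ) ≤ 1 - t := by linarith
  constructor
  · have hΔ : (0:ℝ) ≤ ρt ^ 2 - ρmin ^ 2 := by nlinarith
    have hs : Real.sqrt (ρt ^ 2 - ρmin ^ 2) ^ 2 = ρt ^ 2 - ρmin ^ 2 := Real.sq_sqrt hΔ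
    have hrate2 : ‖v - u‖ ^ 2 ≤ 4 * (ρt ^ 2 - ρmin ^ 2) := by
      nlinarith [norm_nonneg (v - u), Real.sqrt_nonneg (ρt ^ 2 - ρmin ^ 2)]
    have h1 : ‖(1 - t) • u + t • v‖ ^ 2 =
        (1-t)^2 * ‖u‖^2 + 2 * ((1-t)*t) * (inner ℝ u v : ℝ) + t^2 * ‖v‖^2 := by
      rw [norm_add_sq_real, norm_smul, norm_smul, real_inner_smul_left,
        real_inner_smul_right, Real.norm_eq_abs, Real.norm_eq_abs,
        abs_of_nonneg ht1', abs_of_nonneg ht0]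
      ring
    have h2 : ‖v - u‖ ^ 2 = ‖v‖^2 - 2 * (inner ℝ u v : ℝ) + ‖u‖^2 := by
      rw [norm_sub_sq_real, real_inner_comm]
    have hexp : ‖(1 - t) • u + t • v‖ ^ 2 =
        (1 - t) * ‖u‖ ^ 2 + t * ‖v‖ ^ 2 - t * (1 - t) * ‖v - u‖ ^ 2 := by
      rw [h1, h2]; ring
    have hu2' : ρt ^ 2 ≤ ‖u‖ ^ 2 := by nlinarith [norm_nonneg u]
    have hv2' : ρt ^ 2 ≤ ‖v‖ ^ 2 := by nlinarith [norm_nonneg v]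
    have htt : (0:ℝ) ≤ t * (1 - t) := mul_nonneg ht0 ht1'
    have hsq : ρmin ^ 2 ≤ ‖(1 - t) • u + t • v‖ ^ 2 := by
      rw [hexp]
      nlinarith [mul_nonneg htt (sub_nonneg.mpr hrate2),
        mul_nonneg (sq_nonneg (1 - 2*t)) hΔ,
        mul_nonneg ht1' (sub_nonneg.mpr hu2'),
        mul_nonneg ht0 (sub_nonneg.mpr hv2')]
    calc ρmin = Real.sqrt (ρmin ^ 2) := (Real.sqrt_sq hρ0.le).symm
      _ ≤ Real.sqrt (‖(1 - t) • u + t • v‖ ^ 2) := Real.sqrt_le_sqrt hsq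
      _ = ‖(1 - t) • u + t • v‖ := Real.sqrt_sq (norm_nonneg _)
  · calc ‖(1 - t) • u + t • v‖ ≤ ‖(1 - t) • u‖ + ‖t • v‖ := norm_add_le _ _
      _ = (1 - t) * ‖u‖ + t * ‖v‖ := by
          rw [norm_smul, norm_smul, Real.norm_of_nonneg ht1', Real.norm_of_nonneg ht0]
      _ ≤ (1 - t) * ρmax + t * ρmax := by gcongr <;> linarith
      _ = ρmax := by ring
end

section
/- Fix N ≥ 1, matrices A ∈ ℝ^{n_x×n_x}, B₀, B₁ ∈ ℝ^{n_x×n_u}, a matrix G_mat ∈ ℝ^{n_G×n_x} and vector g ∈ ℝ^{n_G}, a point x_init ∈ ℝ^{n_x}, a convex continuous function m : ℝ^{n_x} → ℝ, convex continuous functions l_i : ℝ → ℝ for i = 1, …, N+1, and 0 < ρ_min < ρ_max. Let F be the set of tuples (x₁,…,x_{N+1}, u₁,…,u_{N+1}, σ₁,…,σ_{N+1}) with x_i ∈ ℝ^{n_x}, u_i ∈ ℝ^{n_u}, σ_i ∈ ℝ satisfying: x_{i+1} = A x_i + B₀ u_i + B₁ u_{i+1} for all 1 ≤ i ≤ N;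 (u_i, σ_i) ∈ V for all 1 ≤ i ≤ N+1; x₁ = x_init; and G_mat x_{N+1} + g = 0. Assume there exists a point of F with ‖u_i‖ < ρ_max for all i (Slater-type assumption). Then for any minimizer (x*, u*, σ*) of the cost J(x, u, σ) = m(x_{N+1}) + Σ_{i=1}^{N+1} l_i(σ_i) over F, there exist dual variables η₁,…,η_N ∈ ℝ^{n_x}, μ₁ ∈ ℝ^{n_x}, μ₂ ∈ ℝ^{n_G} such that (x*, u*, σ*) minimizes the Lagrangian L(x, u, σ) = m(x_{N+1}) + Σ_{i=1}^{N+1} l_i(σ_i) + Σ_{i=1}^{N} ⟨η_i, −x_{i+1} + A x_i + B₀ u_i + B₁ u_{i+1}⟩ + ⟨μ₁, x₁ − x_init⟩ + ⟨μ₂, G_mat x_{N+1} + g⟩ over all tuples (x, u, σ) with (u_i, σ_i) ∈ V for all i (and x unconstrained). -/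
open RealInnerProductSpace

/-- Matrix-vector multiplication viewed as a map between Euclidean spaces
(definitionally `Matrix.mulVec`). -/
def mulVecE {k n : ℕ} (M : Matrix (Fin k) (Fin n) ℝ)
    (v : EuclideanSpace ℝ (Fin n)) : EuclideanSpace ℝ (Fin k) :=
  WithLp.toLp 2 (M.mulVec v)

namespace LCvxAux

lemma mulVecE_add {k n : ℕ} (M : Matrix (Fin k) (Fin n) ℝ)
    (x y : EuclideanSpace ℝ (Fin n)) :
    mulVecE M (x + y) = mulVecE M x + mulVecE M y := by simp [mulVecE, Matrix.mulVec_add]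

lemma mulVecE_sub {k n : ℕ} (M : Matrix (Fin k) (Fin n) ℝ)
    (x y : EuclideanSpace ℝ (Fin n)) :
    mulVecE M (x - y) = mulVecE M x - mulVecE M y := by simp [mulVecE, Matrix.mulVec_sub]

lemma mulVecE_smul {k n : ℕ} (M : Matrix (Fin k) (Fin n) ℝ) (t : ℝ)
    (x : EuclideanSpace ℝ (Fin n)) :
    mulVecE M (t • x) = t • mulVecE M x := by simp [mulVecE, Matrix.mulVec_smul]

noncomputable def mulVecL {k n : ℕ} (M : Matrix (Fin k) (Fin n) ℝ) :
    EuclideanSpace ℝ (Fin n) →ₗ[ℝ] EuclideanSpace ℝ (Fin k) where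
  toFun := mulVecE M
  map_add' := mulVecE_add M
  map_smul' := mulVecE_smul M

lemma mulVecE_continuous {k n : ℕ} (M : Matrix (Fin k) (Fin n) ℝ) :
    Continuous (mulVecE M) := (mulVecL M).continuous_of_finiteDimensional

variable {nx nu N : ℕ} (A : Matrix (Fin nx) (Fin nx) ℝ) (B0 B1 : Matrix (Fin nx) (Fin nu) ℝ)

/-- forward trajectory with initial point `a`, dynamics defect `b` and controls `u`. -/
noncomputable def traj (a : EuclideanSpace ℝ (Fin nx)) (b : Fin N → EuclideanSpace ℝ (Fin nx))
    (u : Fin (N + 1) → EuclideanSpace ℝ (Fin nu)) : ℕ → EuclideanSpace ℝ (Fin nx)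
  | 0 => a
  | k + 1 =>
    if h : k < N then
      mulVecE A (traj a b u k) + mulVecE B0 (u ⟨k, by omega⟩)
        + mulVecE B1 (u ⟨k + 1, by omega⟩) - b ⟨k, h⟩
    else 0

lemma traj_add (a a' : EuclideanSpace ℝ (Fin nx)) (b b' : Fin N → EuclideanSpace ℝ (Fin nx))
    (u u' : Fin (N + 1) → EuclideanSpace ℝ (Fin nu)) (k : ℕ) :
    traj A B0 B1 (a + a') (b + b') (u + u') k
      = traj A B0 B1 a b u k + traj A B0 B1 a' b' u' k := by
  induction k with
  | zero => rfl
  | succ k ih =>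
    by_cases h : k < N
    · simp only [traj, dif_pos h, ih, Pi.add_apply, mulVecE_add]
      abel
    · simp [traj, dif_neg h]

lemma traj_sub (a a' : EuclideanSpace ℝ (Fin nx)) (b b' : Fin N → EuclideanSpace ℝ (Fin nx))
    (u u' : Fin (N + 1) → EuclideanSpace ℝ (Fin nu)) (k : ℕ) :
    traj A B0 B1 (a - a') (b - b') (u - u') k
      = traj A B0 B1 a b u k - traj A B0 B1 a' b' u' k := by
  induction k with
  | zero => rfl
  | succ k ih =>
    by_cases h : k < N
    · simp only [traj, dif_pos h, ih, Pi.sub_apply, mulVecE_sub]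
      abel
    · simp [traj, dif_neg h]

lemma traj_smul (t : ℝ) (a : EuclideanSpace ℝ (Fin nx)) (b : Fin N → EuclideanSpace ℝ (Fin nx))
    (u : Fin (N + 1) → EuclideanSpace ℝ (Fin nu)) (k : ℕ) :
    traj A B0 B1 (t • a) (t • b) (t • u) k = t • traj A B0 B1 a b u k := by
  induction k with
  | zero => rfl
  | succ k ih =>
    by_cases h : k < N
    · simp only [traj, dif_pos h, ih, Pi.smul_apply, mulVecE_smul, smul_add, smul_sub]
    · simp [traj, dif_neg h]

/-- the trajectory built from defects `b` satisfies the defect equations. -/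
lemma traj_satisfies (a : EuclideanSpace ℝ (Fin nx)) (b : Fin N → EuclideanSpace ℝ (Fin nx))
    (u : Fin (N + 1) → EuclideanSpace ℝ (Fin nu)) (i : Fin N) :
    -traj A B0 B1 a b u i.succ.val + mulVecE A (traj A B0 B1 a b u i.castSucc.val)
      + mulVecE B0 (u i.castSucc) + mulVecE B1 (u i.succ) = b i := by
  have hv : (i.succ.val : ℕ) = i.val + 1 := rfl
  rw [hv]
  have h : (i : ℕ) < N := i.isLt
  simp only [traj, dif_pos h]
  have h1 : (⟨i.val, by omega⟩ : Fin (N + 1)) = i.castSucc := rfl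
  have h2 : (⟨i.val + 1, by omega⟩ : Fin (N + 1)) = i.succ := rfl
  have h3 : (⟨i.val, h⟩ : Fin N) = i := rfl
  rw [h1, h2, h3]
  simp only [Fin.coe_castSucc]
  abel

/-- any sequence is the trajectory of its own defects. -/
lemma traj_reconstruct (x : Fin (N + 1) → EuclideanSpace ℝ (Fin nx))
    (u : Fin (N + 1) → EuclideanSpace ℝ (Fin nu)) :
    ∀ (k : ℕ) (hk : k < N + 1),
      traj A B0 B1 (x 0)
        (fun i => -x i.succ + mulVecE A (x i.castSucc) + mulVecE B0 (u i.castSucc)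
          + mulVecE B1 (u i.succ)) u k = x ⟨k, hk⟩ := by
  intro k
  induction k with
  | zero => intro hk; rfl
  | succ k ih =>
    intro hk
    have h : k < N := by omega
    have ihk := ih (by omega)
    simp only [traj, dif_pos h, ihk]
    have h1 : ((⟨k, h⟩ : Fin N)).castSucc = (⟨k, by omega⟩ : Fin (N + 1)) := rfl
    have h2 : ((⟨k, h⟩ : Fin N)).succ = (⟨k + 1, hk⟩ : Fin (N + 1)) := rfl
    rw [h1, h2]
    abel

lemma traj_continuous (k : ℕ) :
    Continuous (fun q : (EuclideanSpace ℝ (Fin nx)) × (Fin N → EuclideanSpace ℝ (Fin nx))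
        × (Fin (N + 1) → EuclideanSpace ℝ (Fin nu)) =>
      traj A B0 B1 q.1 q.2.1 q.2.2 k) := by
  induction k with
  | zero => exact continuous_fst
  | succ k ih =>
    by_cases h : k < N
    · simp only [traj, dif_pos h]
      refine Continuous.sub (Continuous.add (Continuous.add ?_ ?_) ?_) ?_
      · exact (mulVecE_continuous A).comp ih
      · exact (mulVecE_continuous B0).comp ((continuous_apply _).comp
          (continuous_snd.comp continuous_snd))
      · exact (mulVecE_continuous B1).comp ((continuous_apply _).comp
          (continuous_snd.comp continuous_snd))
      · exact (continuous_apply _).comp (continuous_fst.comp continuous_snd)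
    · simp only [traj, dif_neg h]
      exact continuous_const


/-- Existence of Lagrange multipliers for a convex problem with abstract affine
constraint map `T` into a finite-dimensional inner product space, under the
constraint qualification that all small values `y` are attained by `T` on `K`
with uniformly bounded cost. -/
lemma lagrange_dual {E : Type*} [AddCommGroup E] [Module ℝ E]
    {F : Type*} [NormedAddCommGroup F] [InnerProductSpace ℝ F] [FiniteDimensional ℝ F]
    (K : Set E) (hK : Convex ℝ K) (f : E → ℝ) (hf : ConvexOn ℝ K f)
    (T : E → F)
    (hT : ∀ z w : E, ∀ a b : ℝ, a + b = 1 → T (a • z + b • w) = a • T z + b • T w)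
    (zs : E) (hzs : zs ∈ K) (hTzs : T zs = 0)
    (hopt : ∀ z ∈ K, T z = 0 → f zs ≤ f z)
    (ε M : ℝ) (hε : 0 < ε)
    (hCQ : ∀ y : F, ‖y‖ < ε → ∃ z ∈ K, T z = y ∧ f z ≤ M) :
    ∃ lam : F, ∀ z ∈ K, f zs ≤ f z + ⟪lam, T z⟫ := by
  classical
  set B : Set (F × ℝ) := {q | ∃ z ∈ K, T z = q.1 ∧ f z < q.2} with hB
  -- convexity of B
  have hBconv : Convex ℝ B := by
    rintro q1 ⟨z1, hz1, hTz1, hfz1⟩ q2 ⟨z2, hz2, hTz2, hfz2⟩ a b ha hb hab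
    refine ⟨a • z1 + b • z2, hK hz1 hz2 ha hb hab, ?_, ?_⟩
    · rw [hT z1 z2 a b hab, hTz1, hTz2]; rfl
    · have hcv := hf.2 hz1 hz2 ha hb hab
      have h2 : a * f z1 + b * f z2 < a * q1.2 + b * q2.2 := by
        rcases eq_or_lt_of_le ha with rfl | ha'
        · simp only [zero_mul, zero_add] at *
          have hb1 : b = 1 := by linarith
          nlinarith
        · nlinarith
      calc f (a • z1 + b • z2) ≤ a * f z1 + b * f z2 := by simpa using hcv
        _ < a * q1.2 + b * q2.2 := h2
        _ = (a • q1 + b • q2).2 := rfl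
  -- interior point
  have hq0 : ((0, M + 1) : F × ℝ) ∈ interior B := by
    have hopen : IsOpen {q : F × ℝ | ‖q.1‖ < ε ∧ M < q.2} := by
      refine IsOpen.inter ?_ ?_
      · exact isOpen_lt (continuous_norm.comp continuous_fst) continuous_const
      · exact isOpen_lt continuous_const continuous_snd
    have hsub : {q : F × ℝ | ‖q.1‖ < ε ∧ M < q.2} ⊆ B := by
      rintro q ⟨h1, h2⟩
      obtain ⟨z, hz, hTz, hfz⟩ := hCQ q.1 h1
      exact ⟨z, hz, hTz, lt_of_le_of_lt hfz h2⟩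
    refine mem_interior.2 ⟨_, hsub, hopen, ?_⟩
    constructor
    · simpa using hε
    · simp
  -- the optimal value point is not in B
  have hp0 : ((0, f zs) : F × ℝ) ∉ B := by
    rintro ⟨z, hz, hTz, hfz⟩
    exact absurd (hopt z hz hTz) (not_le.2 hfz)
  -- separation
  obtain ⟨φ, hφ⟩ := geometric_hahn_banach_point_open (hBconv.interior) isOpen_interior
    (fun h => hp0 (interior_subset h))
  -- extension to all of B
  have hle : ∀ q ∈ B, φ (0, f zs) ≤ φ q := by
    intro q hq
    have hcont : Continuous fun t : ℝ => φ (t • ((0, M + 1) : F × ℝ) + (1 - t) • q) := by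
      fun_prop
    have htend : Filter.Tendsto (fun t : ℝ => φ (t • ((0, M + 1) : F × ℝ) + (1 - t) • q))
        (nhdsWithin 0 (Set.Ioi 0)) (nhds (φ q)) :=
      (hcont.tendsto' 0 (φ q) (by norm_num)).mono_left nhdsWithin_le_nhds
    refine ge_of_tendsto htend ?_
    have hev : ∀ᶠ t : ℝ in nhdsWithin 0 (Set.Ioi 0), t < 1 := by
      refine Filter.Eventually.filter_mono nhdsWithin_le_nhds ?_
      exact Filter.Tendsto.eventually_lt_const (by norm_num) Filter.tendsto_id
    filter_upwards [hev, self_mem_nhdsWithin] with t ht1 ht0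
    have hmem : t • ((0, M + 1) : F × ℝ) + (1 - t) • q ∈ interior B :=
      hBconv.combo_interior_closure_mem_interior hq0 (subset_closure hq) ht0
        (by linarith) (by ring)
    exact (hφ _ hmem).le
  -- decompose the functional
  set lam0 : ℝ := φ (0, 1) with hlam0
  set w : F := (InnerProductSpace.toDual ℝ F).symm (φ.comp (ContinuousLinearMap.inl ℝ F ℝ))
    with hw
  have hφeq : ∀ (y : F) (r : ℝ), φ (y, r) = ⟪w, y⟫ + r * lam0 := by
    intro y r
    have hsplit : ((y, r) : F × ℝ) = (y, (0 : ℝ)) + r • ((0 : F), (1 : ℝ)) := by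
      ext <;> simp
    have h1 : φ (y, (0 : ℝ)) = ⟪w, y⟫ := by
      rw [hw, InnerProductSpace.toDual_symm_apply]; rfl
    rw [hsplit, map_add, map_smul, h1, smul_eq_mul, mul_comm]
  have hφp0 : φ (0, f zs) = f zs * lam0 := by rw [hφeq]; simp
  -- lam0 ≥ 0
  have hlam0nn : 0 ≤ lam0 := by
    have hmem : ((0 : F), f zs + 1) ∈ B := ⟨zs, hzs, by simpa using hTzs, show f zs < f zs + 1 by linarith⟩
    have := hle _ hmem
    rw [hφp0, hφeq] at this
    simp only [inner_zero_right] at this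
    nlinarith
  -- lam0 > 0
  have hlam0pos : 0 < lam0 := by
    rcases eq_or_lt_of_le hlam0nn with h0 | h; swap
    · exact h
    exfalso
    have hwzero : w = 0 := by
      have hkey : ∀ y : F, ‖y‖ < ε → 0 ≤ ⟪w, y⟫ := by
        intro y hy
        obtain ⟨z, hz, hTz, hfz⟩ := hCQ y hy
        have hmem : (y, M + 1) ∈ B := ⟨z, hz, hTz, show f z < M + 1 by linarith⟩
        have := hle _ hmem
        rw [hφp0, hφeq] at this
        simp only [← h0, mul_zero, add_zero] at this
        linarith
      by_contra hne
      set c : ℝ := ε / (2 * (‖w‖ + 1)) with hc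
      have hwpos : 0 < ‖w‖ := norm_pos_iff.2 hne
      have hcpos : 0 < c := by positivity
      have hnorm : ‖-(c • w)‖ < ε := by
        rw [norm_neg, norm_smul, Real.norm_eq_abs, abs_of_pos hcpos, hc]
        rw [div_mul_eq_mul_div, div_lt_iff₀ (by positivity)]
        nlinarith
      have := hkey _ hnorm
      rw [inner_neg_right, real_inner_smul_right] at this
      have hip : ⟪w, w⟫ = ‖w‖ ^ 2 := real_inner_self_eq_norm_sq w
      nlinarith [this, hip, mul_pos hcpos (mul_pos hwpos hwpos)]
    have hstrict := hφ _ hq0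
    rw [hφp0, hφeq] at hstrict
    rw [hwzero] at hstrict
    simp only [inner_zero_left, ← h0, mul_zero, zero_add, add_zero] at hstrict
    exact lt_irrefl _ hstrict
  -- conclusion
  refine ⟨lam0⁻¹ • w, ?_⟩
  intro z hz
  have hkey : f zs * lam0 ≤ ⟪w, T z⟫ + f z * lam0 := by
    have hδ : ∀ δ : ℝ, 0 < δ → f zs * lam0 ≤ ⟪w, T z⟫ + f z * lam0 + δ * lam0 := by
      intro δ hδ
      have hmem : (T z, f z + δ) ∈ B := ⟨z, hz, rfl, show f z < f z + δ by linarith⟩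
      have := hle _ hmem
      rw [hφp0, hφeq] at this
      nlinarith
    refine le_of_forall_pos_le_add ?_
    intro δ' hδ'
    have := hδ (δ' / lam0) (by positivity)
    have hm : δ' / lam0 * lam0 = δ' := div_mul_cancel₀ _ (ne_of_gt hlam0pos)
    linarith [this, hm.le, hm.ge]
  have hln : lam0 ≠ 0 := ne_of_gt hlam0pos
  rw [real_inner_smul_left]
  have h2 := mul_le_mul_of_nonneg_right hkey (le_of_lt (inv_pos.2 hlam0pos))
  have h3 : lam0 * lam0⁻¹ = 1 := mul_inv_cancel₀ hln
  rw [mul_assoc, h3, mul_one] at h2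
  have h4 : (⟪w, T z⟫ + f z * lam0) * lam0⁻¹
      = ⟪w, T z⟫ * lam0⁻¹ + f z * (lam0 * lam0⁻¹) := by ring
  rw [h3, mul_one] at h4
  rw [h4] at h2
  linarith

end LCvxAux

set_option maxHeartbeats 2000000
set_option synthInstance.maxHeartbeats 400000
open LCvxAux

/-- Strong duality / existence of Lagrange multipliers (via Slater's condition)
for the discretized LCvx problem with piecewise linear controls: any minimizer
of the cost over the feasible set `F` also minimizes the Lagrangian, for some
dual variables `η, μ₁, μ₂`, over all tuples satisfying only the control
constraints `(uᵢ, σᵢ) ∈ V`. -/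
theorem stmt_6 (N nx nu nG : ℕ) (hN : 1 ≤ N)
    (A : Matrix (Fin nx) (Fin nx) ℝ) (B0 B1 : Matrix (Fin nx) (Fin nu) ℝ)
    (Gmat : Matrix (Fin nG) (Fin nx) ℝ) (g : EuclideanSpace ℝ (Fin nG))
    (xinit : EuclideanSpace ℝ (Fin nx))
    (m : EuclideanSpace ℝ (Fin nx) → ℝ)
    (hmconv : ConvexOn ℝ Set.univ m) (hmcont : Continuous m)
    (l : Fin (N + 1) → ℝ → ℝ)
    (hlconv : ∀ i, ConvexOn ℝ Set.univ (l i)) (hlcont : ∀ i, Continuous (l i))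
    (ρmin ρmax : ℝ) (hρ0 : 0 < ρmin) (hρ : ρmin < ρmax)
    (F : Set ((Fin (N + 1) → EuclideanSpace ℝ (Fin nx)) ×
      (Fin (N + 1) → EuclideanSpace ℝ (Fin nu)) × (Fin (N + 1) → ℝ)))
    (hF : F = {p | (∀ i : Fin N,
          p.1 i.succ = mulVecE A (p.1 i.castSucc) + mulVecE B0 (p.2.1 i.castSucc)
            + mulVecE B1 (p.2.1 i.succ)) ∧
        (∀ i, ρmin ≤ p.2.2 i ∧ p.2.2 i ≤ ρmax ∧ ‖p.2.1 i‖ ≤ p.2.2 i) ∧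
        p.1 0 = xinit ∧
        mulVecE Gmat (p.1 (Fin.last N)) + g = 0})
    (J : ((Fin (N + 1) → EuclideanSpace ℝ (Fin nx)) ×
      (Fin (N + 1) → EuclideanSpace ℝ (Fin nu)) × (Fin (N + 1) → ℝ)) → ℝ)
    (hJ : J = fun p => m (p.1 (Fin.last N)) + ∑ i, l i (p.2.2 i))
    (hSlater : ∃ p ∈ F, ∀ i, ‖p.2.1 i‖ < ρmax)
    (pstar : (Fin (N + 1) → EuclideanSpace ℝ (Fin nx)) ×
      (Fin (N + 1) → EuclideanSpace ℝ (Fin nu)) × (Fin (N + 1) → ℝ))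
    (hfeas : pstar ∈ F) (hmin : ∀ p ∈ F, J pstar ≤ J p) :
    ∃ (η : Fin N → EuclideanSpace ℝ (Fin nx)) (μ1 : EuclideanSpace ℝ (Fin nx))
      (μ2 : EuclideanSpace ℝ (Fin nG)),
      ∀ p : (Fin (N + 1) → EuclideanSpace ℝ (Fin nx)) ×
        (Fin (N + 1) → EuclideanSpace ℝ (Fin nu)) × (Fin (N + 1) → ℝ),
        (∀ i, ρmin ≤ p.2.2 i ∧ p.2.2 i ≤ ρmax ∧ ‖p.2.1 i‖ ≤ p.2.2 i) →
        (J pstar + (∑ i : Fin N, ⟪η i,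
              -pstar.1 i.succ + mulVecE A (pstar.1 i.castSucc)
                + mulVecE B0 (pstar.2.1 i.castSucc) + mulVecE B1 (pstar.2.1 i.succ)⟫)
            + ⟪μ1, pstar.1 0 - xinit⟫
            + ⟪μ2, mulVecE Gmat (pstar.1 (Fin.last N)) + g⟫) ≤
        (J p + (∑ i : Fin N, ⟪η i,
              -p.1 i.succ + mulVecE A (p.1 i.castSucc)
                + mulVecE B0 (p.2.1 i.castSucc) + mulVecE B1 (p.2.1 i.succ)⟫)
            + ⟪μ1, p.1 0 - xinit⟫
            + ⟪μ2, mulVecE Gmat (p.1 (Fin.last N)) + g⟫) := by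
  classical
  subst hF
  subst hJ
  obtain ⟨phat, hphatF, hslater⟩ := hSlater
  obtain ⟨hdynhat, hctrlhat, hx0hat, htermhat⟩ := hphatF
  obtain ⟨hdynstar, hctrlstar, hx0star, htermstar⟩ := hfeas
  haveI : FiniteDimensional ℝ (PiLp 2 fun _ : Fin N => EuclideanSpace ℝ (Fin nx)) :=
    (WithLp.linearEquiv 2 ℝ _).symm.finiteDimensional
  haveI : FiniteDimensional ℝ (WithLp 2
      ((PiLp 2 fun _ : Fin N => EuclideanSpace ℝ (Fin nx)) × (EuclideanSpace ℝ (Fin nG)))) :=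
    (WithLp.linearEquiv 2 ℝ _).symm.finiteDimensional
  haveI : FiniteDimensional ℝ (WithLp 2 ((EuclideanSpace ℝ (Fin nx)) ×
      (WithLp 2 ((PiLp 2 fun _ : Fin N => EuclideanSpace ℝ (Fin nx)) ×
        (EuclideanSpace ℝ (Fin nG)))))) :=
    (WithLp.linearEquiv 2 ℝ _).symm.finiteDimensional
  set K : Set ((Fin (N + 1) → EuclideanSpace ℝ (Fin nx)) ×
      (Fin (N + 1) → EuclideanSpace ℝ (Fin nu)) × (Fin (N + 1) → ℝ)) :=
    {p | ∀ i, ρmin ≤ p.2.2 i ∧ p.2.2 i ≤ ρmax ∧ ‖p.2.1 i‖ ≤ p.2.2 i} with hKdef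
  set mkF : EuclideanSpace ℝ (Fin nx) → (Fin N → EuclideanSpace ℝ (Fin nx)) →
      EuclideanSpace ℝ (Fin nG) → (WithLp 2 ((EuclideanSpace ℝ (Fin nx)) ×
      (WithLp 2 ((PiLp 2 fun _ : Fin N => EuclideanSpace ℝ (Fin nx)) ×
        (EuclideanSpace ℝ (Fin nG)))))) := fun a b c =>
    (WithLp.equiv 2 _).symm (a, (WithLp.equiv 2 _).symm
      ((WithLp.equiv 2 (∀ _ : Fin N, EuclideanSpace ℝ (Fin nx))).symm b, c)) with hmkF
  set Tmap : ((Fin (N + 1) → EuclideanSpace ℝ (Fin nx)) ×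
      (Fin (N + 1) → EuclideanSpace ℝ (Fin nu)) × (Fin (N + 1) → ℝ)) →
      (WithLp 2 ((EuclideanSpace ℝ (Fin nx)) ×
      (WithLp 2 ((PiLp 2 fun _ : Fin N => EuclideanSpace ℝ (Fin nx)) ×
        (EuclideanSpace ℝ (Fin nG)))))) := fun p =>
    mkF (p.1 0 - xinit)
      (fun i => -p.1 i.succ + mulVecE A (p.1 i.castSucc) + mulVecE B0 (p.2.1 i.castSucc)
        + mulVecE B1 (p.2.1 i.succ))
      (mulVecE Gmat (p.1 (Fin.last N)) + g) with hTmap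
  set Jf : ((Fin (N + 1) → EuclideanSpace ℝ (Fin nx)) ×
      (Fin (N + 1) → EuclideanSpace ℝ (Fin nu)) × (Fin (N + 1) → ℝ)) → ℝ :=
    fun p => m (p.1 (Fin.last N)) + ∑ i, l i (p.2.2 i) with hJf
  set GLfun : (EuclideanSpace ℝ (Fin nx)) × (Fin N → EuclideanSpace ℝ (Fin nx))
      × (Fin (N + 1) → EuclideanSpace ℝ (Fin nu)) → EuclideanSpace ℝ (Fin nG) := fun q =>
    mulVecE Gmat (traj A B0 B1 q.1 q.2.1 q.2.2 N) with hGLfun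
  -- basic algebra for mkF
  have mkF_add : ∀ a a' b b' c c', mkF a b c + mkF a' b' c' = mkF (a + a') (b + b') (c + c') := by
    intro a a' b b' c c'
    simp only [hmkF, WithLp.equiv_symm_apply, ← WithLp.toLp_add, Prod.mk_add_mk]
  have mkF_smul : ∀ (t : ℝ) a b c, t • mkF a b c = mkF (t • a) (t • b) (t • c) := by
    intro t a b c
    simp only [hmkF, WithLp.equiv_symm_apply, ← WithLp.toLp_smul, Prod.smul_mk]
  have hGL_add : ∀ q q', GLfun (q + q') = GLfun q + GLfun q' := by
    intro q q'
    simp only [hGLfun]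
    have h := traj_add A B0 B1 q.1 q'.1 q.2.1 q'.2.1 q.2.2 q'.2.2 N
    have h2 : traj A B0 B1 (q + q').1 (q + q').2.1 (q + q').2.2 N
        = traj A B0 B1 q.1 q.2.1 q.2.2 N + traj A B0 B1 q'.1 q'.2.1 q'.2.2 N := h
    rw [h2, mulVecE_add]
  have hGL_smul : ∀ (t : ℝ) q, GLfun (t • q) = t • GLfun q := by
    intro t q
    simp only [hGLfun]
    have h : traj A B0 B1 (t • q).1 (t • q).2.1 (t • q).2.2 N
        = t • traj A B0 B1 q.1 q.2.1 q.2.2 N := traj_smul A B0 B1 t q.1 q.2.1 q.2.2 N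
    rw [h, mulVecE_smul]
  set Θ : ((EuclideanSpace ℝ (Fin nx)) × (Fin N → EuclideanSpace ℝ (Fin nx))
      × (Fin (N + 1) → EuclideanSpace ℝ (Fin nu))) →ₗ[ℝ]
      (WithLp 2 ((EuclideanSpace ℝ (Fin nx)) ×
      (WithLp 2 ((PiLp 2 fun _ : Fin N => EuclideanSpace ℝ (Fin nx)) ×
        (EuclideanSpace ℝ (Fin nG)))))) :=
    { toFun := fun q => mkF q.1 q.2.1 (GLfun q)
      map_add' := by
        intro q q'
        show mkF (q + q').1 (q + q').2.1 (GLfun (q + q')) = mkF q.1 q.2.1 (GLfun q) + mkF q'.1 q'.2.1 (GLfun q')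
        rw [hGL_add, mkF_add]
        rfl
      map_smul' := by
        intro t q
        show mkF (t • q).1 (t • q).2.1 (GLfun (t • q)) = t • mkF q.1 q.2.1 (GLfun q)
        rw [hGL_smul, mkF_smul]
        rfl } with hΘ
  set S : Submodule ℝ (WithLp 2 ((EuclideanSpace ℝ (Fin nx)) ×
      (WithLp 2 ((PiLp 2 fun _ : Fin N => EuclideanSpace ℝ (Fin nx)) ×
        (EuclideanSpace ℝ (Fin nG)))))) := LinearMap.range Θ with hS
  -- defect vectors of the feasible points vanish
  have hhatzero : ∀ i : Fin N, -phat.1 i.succ + mulVecE A (phat.1 i.castSucc)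
      + mulVecE B0 (phat.2.1 i.castSucc) + mulVecE B1 (phat.2.1 i.succ) = 0 := by
    intro i; rw [hdynhat i]; abel
  have hstarzero : ∀ i : Fin N, -pstar.1 i.succ + mulVecE A (pstar.1 i.castSucc)
      + mulVecE B0 (pstar.2.1 i.castSucc) + mulVecE B1 (pstar.2.1 i.succ) = 0 := by
    intro i; rw [hdynstar i]; abel
  have hhattraj : ∀ (k : ℕ) (hk : k < N + 1),
      traj A B0 B1 xinit 0 phat.2.1 k = phat.1 ⟨k, hk⟩ := by
    intro k hk
    have h := traj_reconstruct A B0 B1 phat.1 phat.2.1 k hk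
    rw [hx0hat] at h
    have hb0 : (fun i : Fin N => -phat.1 i.succ + mulVecE A (phat.1 i.castSucc)
        + mulVecE B0 (phat.2.1 i.castSucc) + mulVecE B1 (phat.2.1 i.succ))
        = (0 : Fin N → EuclideanSpace ℝ (Fin nx)) := funext fun i => hhatzero i
    rw [← hb0]
    exact h
  -- every Tmap value lies in S
  have hmemS : ∀ p, Tmap p ∈ S := by
    intro p
    refine ⟨(p.1 0 - xinit,
      fun i => -p.1 i.succ + mulVecE A (p.1 i.castSucc) + mulVecE B0 (p.2.1 i.castSucc)
        + mulVecE B1 (p.2.1 i.succ), p.2.1 - phat.2.1), ?_⟩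
    show mkF _ _ _ = Tmap p
    simp only [hTmap]
    congr 1
    simp only [hGLfun]
    have hsub := traj_sub A B0 B1 (p.1 0) xinit
      (fun i => -p.1 i.succ + mulVecE A (p.1 i.castSucc) + mulVecE B0 (p.2.1 i.castSucc)
        + mulVecE B1 (p.2.1 i.succ)) 0 p.2.1 phat.2.1 N
    rw [sub_zero] at hsub
    have h1 : traj A B0 B1 (p.1 0)
        (fun i => -p.1 i.succ + mulVecE A (p.1 i.castSucc) + mulVecE B0 (p.2.1 i.castSucc)
          + mulVecE B1 (p.2.1 i.succ)) p.2.1 N = p.1 (Fin.last N) :=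
      traj_reconstruct A B0 B1 p.1 p.2.1 N (by omega)
    have h2 : traj A B0 B1 xinit 0 phat.2.1 N = phat.1 (Fin.last N) := hhattraj N (by omega)
    rw [hsub, h1, h2, mulVecE_sub, eq_neg_of_add_eq_zero_left htermhat]
    abel
  -- K is convex
  have hKconv : Convex ℝ K := by
    intro p hp q hq a b ha hb hab
    intro i
    obtain ⟨h1p, h2p, h3p⟩ := hp i
    obtain ⟨h1q, h2q, h3q⟩ := hq i
    have hmin1 : a * ρmin + b * ρmin = ρmin := by rw [← add_mul, hab, one_mul]
    have hmax1 : a * ρmax + b * ρmax = ρmax := by rw [← add_mul, hab, one_mul]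
    refine ⟨?_, ?_, ?_⟩
    · show ρmin ≤ a * p.2.2 i + b * q.2.2 i
      have := mul_le_mul_of_nonneg_left h1p ha
      have := mul_le_mul_of_nonneg_left h1q hb
      linarith
    · show a * p.2.2 i + b * q.2.2 i ≤ ρmax
      have := mul_le_mul_of_nonneg_left h2p ha
      have := mul_le_mul_of_nonneg_left h2q hb
      linarith
    · show ‖a • p.2.1 i + b • q.2.1 i‖ ≤ a * p.2.2 i + b * q.2.2 i
      calc ‖a • p.2.1 i + b • q.2.1 i‖ ≤ ‖a • p.2.1 i‖ + ‖b • q.2.1 i‖ := norm_add_le _ _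
        _ = a * ‖p.2.1 i‖ + b * ‖q.2.1 i‖ := by
            rw [norm_smul, norm_smul, Real.norm_eq_abs, Real.norm_eq_abs,
              abs_of_nonneg ha, abs_of_nonneg hb]
        _ ≤ a * p.2.2 i + b * q.2.2 i := by
            have := mul_le_mul_of_nonneg_left h3p ha
            have := mul_le_mul_of_nonneg_left h3q hb
            linarith
  -- Jf is convex on K
  have hJconv : ConvexOn ℝ K Jf := by
    refine ⟨hKconv, ?_⟩
    intro p hp q hq a b ha hb hab
    simp only [hJf]
    have hm := hmconv.2 (Set.mem_univ (p.1 (Fin.last N))) (Set.mem_univ (q.1 (Fin.last N)))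
      ha hb hab
    have hl : ∀ i : Fin (N + 1),
        l i ((a • p + b • q).2.2 i) ≤ a * l i (p.2.2 i) + b * l i (q.2.2 i) := by
      intro i
      have h := (hlconv i).2 (Set.mem_univ (p.2.2 i)) (Set.mem_univ (q.2.2 i)) ha hb hab
      simpa using h
    have hsum := Finset.sum_le_sum (fun i (_ : i ∈ Finset.univ) => hl i)
    have hsplit : (∑ i : Fin (N + 1), (a * l i (p.2.2 i) + b * l i (q.2.2 i)))
        = a * ∑ i, l i (p.2.2 i) + b * ∑ i, l i (q.2.2 i) := by
      rw [Finset.sum_add_distrib, ← Finset.mul_sum, ← Finset.mul_sum]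
    have he : (a • p + b • q).1 (Fin.last N)
        = a • p.1 (Fin.last N) + b • q.1 (Fin.last N) := rfl
    rw [he]
    have hm' : m (a • p.1 (Fin.last N) + b • q.1 (Fin.last N))
        ≤ a * m (p.1 (Fin.last N)) + b * m (q.1 (Fin.last N)) := by simpa using hm
    have : (∑ i : Fin (N + 1), l i ((a • p + b • q).2.2 i))
        ≤ a * ∑ i, l i (p.2.2 i) + b * ∑ i, l i (q.2.2 i) := le_of_le_of_eq hsum hsplit
    simp only [smul_eq_mul]
    linarith
  -- Tmap is affine
  have combo_subX : ∀ (a b : ℝ), a + b = 1 → ∀ v w c : EuclideanSpace ℝ (Fin nx),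
      a • (v - c) + b • (w - c) = a • v + b • w - c := by
    intro a b hab v w c
    have h : a • c + b • c = c := by rw [← add_smul, hab, one_smul]
    have h2 : a • v - a • c + (b • w - b • c) = a • v + b • w - (a • c + b • c) := by abel
    rw [smul_sub, smul_sub, h2, h]
  have combo_addG : ∀ (a b : ℝ), a + b = 1 → ∀ v w c : EuclideanSpace ℝ (Fin nG),
      a • (v + c) + b • (w + c) = a • v + b • w + c := by
    intro a b hab v w c
    have h : a • c + b • c = c := by rw [← add_smul, hab, one_smul]
    have h2 : a • v + a • c + (b • w + b • c) = a • v + b • w + (a • c + b • c) := by abel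
    rw [smul_add, smul_add, h2, h]
  have hTaff : ∀ z w, ∀ (a b : ℝ), a + b = 1 →
      Tmap (a • z + b • w) = a • Tmap z + b • Tmap w := by
    intro z w a b hab
    simp only [hTmap]
    rw [mkF_smul, mkF_smul, mkF_add]
    have e1 : (a • z + b • w).1 0 - xinit
        = a • (z.1 0 - xinit) + b • (w.1 0 - xinit) := by
      rw [combo_subX a b hab]
      rfl
    have e2 : (fun i : Fin N => -(a • z + b • w).1 i.succ
          + mulVecE A ((a • z + b • w).1 i.castSucc)
          + mulVecE B0 ((a • z + b • w).2.1 i.castSucc)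
          + mulVecE B1 ((a • z + b • w).2.1 i.succ))
        = a • (fun i : Fin N => -z.1 i.succ + mulVecE A (z.1 i.castSucc)
            + mulVecE B0 (z.2.1 i.castSucc) + mulVecE B1 (z.2.1 i.succ))
          + b • (fun i : Fin N => -w.1 i.succ + mulVecE A (w.1 i.castSucc)
            + mulVecE B0 (w.2.1 i.castSucc) + mulVecE B1 (w.2.1 i.succ)) := by
      funext i
      show -(a • z + b • w).1 i.succ + mulVecE A ((a • z + b • w).1 i.castSucc)
          + mulVecE B0 ((a • z + b • w).2.1 i.castSucc)
          + mulVecE B1 ((a • z + b • w).2.1 i.succ)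
          = a • (-z.1 i.succ + mulVecE A (z.1 i.castSucc) + mulVecE B0 (z.2.1 i.castSucc)
              + mulVecE B1 (z.2.1 i.succ))
            + b • (-w.1 i.succ + mulVecE A (w.1 i.castSucc) + mulVecE B0 (w.2.1 i.castSucc)
              + mulVecE B1 (w.2.1 i.succ))
      have f1 : (a • z + b • w).1 i.succ = a • z.1 i.succ + b • w.1 i.succ := rfl
      have f2 : (a • z + b • w).1 i.castSucc = a • z.1 i.castSucc + b • w.1 i.castSucc := rfl
      have f3 : (a • z + b • w).2.1 i.castSucc
          = a • z.2.1 i.castSucc + b • w.2.1 i.castSucc := rfl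
      have f4 : (a • z + b • w).2.1 i.succ = a • z.2.1 i.succ + b • w.2.1 i.succ := rfl
      rw [f1, f2, f3, f4, mulVecE_add, mulVecE_add, mulVecE_add,
        mulVecE_smul, mulVecE_smul, mulVecE_smul, mulVecE_smul, mulVecE_smul, mulVecE_smul,
        smul_add, smul_add, smul_add, smul_add, smul_add, smul_add, smul_neg, smul_neg]
      abel
    have e3 : mulVecE Gmat ((a • z + b • w).1 (Fin.last N)) + g
        = a • (mulVecE Gmat (z.1 (Fin.last N)) + g)
          + b • (mulVecE Gmat (w.1 (Fin.last N)) + g) := by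
      have f1 : (a • z + b • w).1 (Fin.last N)
          = a • z.1 (Fin.last N) + b • w.1 (Fin.last N) := rfl
      rw [f1, mulVecE_add, mulVecE_smul, mulVecE_smul, combo_addG a b hab]
    rw [e1, e2, e3]
  have hTstar0 : Tmap pstar = 0 := by
    simp only [hTmap]
    have h1 : pstar.1 0 - xinit = 0 := sub_eq_zero_of_eq hx0star
    have h2 : (fun i : Fin N => -pstar.1 i.succ + mulVecE A (pstar.1 i.castSucc)
        + mulVecE B0 (pstar.2.1 i.castSucc) + mulVecE B1 (pstar.2.1 i.succ))
        = fun _ => 0 := funext fun i => hstarzero i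
    rw [h1, h2, htermstar]
    rfl
  -- the control-constraint parametrization near the Slater point
  set σt : Fin (N + 1) → ℝ := fun i => max (phat.2.2 i) ((‖phat.2.1 i‖ + ρmax) / 2) with hσt
  have hσt1 : ∀ i, ρmin ≤ σt i := fun i => le_trans (hctrlhat i).1 (le_max_left _ _)
  have hσt2 : ∀ i, σt i ≤ ρmax := fun i => max_le (hctrlhat i).2.1 (by linarith [hslater i])
  have hσt3 : ∀ i, ‖phat.2.1 i‖ < σt i := fun i =>
    lt_of_lt_of_le (by linarith [hslater i]) (le_max_right _ _)
  obtain ⟨ρi, hρieq⟩ := Θ.rangeRestrict.exists_rightInverse_of_surjective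
    (LinearMap.range_rangeRestrict Θ)
  have hΘρ : ∀ y : S, Θ (ρi y) = (y : WithLp 2 ((EuclideanSpace ℝ (Fin nx)) ×
      (WithLp 2 ((PiLp 2 fun _ : Fin N => EuclideanSpace ℝ (Fin nx)) ×
        (EuclideanSpace ℝ (Fin nG)))))) := by
    intro y
    have h := LinearMap.ext_iff.mp hρieq y
    exact congrArg Subtype.val h
  set Rmap : S → ((Fin (N + 1) → EuclideanSpace ℝ (Fin nx)) ×
      (Fin (N + 1) → EuclideanSpace ℝ (Fin nu)) × (Fin (N + 1) → ℝ)) := fun y =>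
    (fun i => traj A B0 B1 (xinit + (ρi y).1) ((ρi y).2.1) (phat.2.1 + (ρi y).2.2) i.val,
     phat.2.1 + (ρi y).2.2, σt) with hRmap
  have hTR : ∀ y : S, Tmap (Rmap y) = (y : WithLp 2 ((EuclideanSpace ℝ (Fin nx)) ×
      (WithLp 2 ((PiLp 2 fun _ : Fin N => EuclideanSpace ℝ (Fin nx)) ×
        (EuclideanSpace ℝ (Fin nG)))))) := by
    intro y
    rw [← hΘρ y]
    have e1 : (Rmap y).1 0 - xinit = (ρi y).1 := by
      show xinit + (ρi y).1 - xinit = (ρi y).1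
      abel
    have e2 : (fun i : Fin N => -(Rmap y).1 i.succ + mulVecE A ((Rmap y).1 i.castSucc)
        + mulVecE B0 ((Rmap y).2.1 i.castSucc) + mulVecE B1 ((Rmap y).2.1 i.succ))
        = (ρi y).2.1 := by
      funext i
      exact traj_satisfies A B0 B1 (xinit + (ρi y).1) ((ρi y).2.1) (phat.2.1 + (ρi y).2.2) i
    have e3 : mulVecE Gmat ((Rmap y).1 (Fin.last N)) + g = GLfun (ρi y) := by
      show mulVecE Gmat
        (traj A B0 B1 (xinit + (ρi y).1) ((ρi y).2.1) (phat.2.1 + (ρi y).2.2) N) + g = _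
      have hadd := traj_add A B0 B1 xinit (ρi y).1 0 ((ρi y).2.1) phat.2.1 ((ρi y).2.2) N
      rw [zero_add] at hadd
      rw [hadd, mulVecE_add, hhattraj N (by omega)]
      have ht2 : mulVecE Gmat (phat.1 ⟨N, by omega⟩) = -g :=
        eq_neg_of_add_eq_zero_left htermhat
      rw [ht2]
      simp only [hGLfun]
      abel
    show Tmap (Rmap y) = mkF (ρi y).1 (ρi y).2.1 (GLfun (ρi y))
    simp only [hTmap]
    rw [e1, e2, e3]
  have hρicont : Continuous ρi := ρi.continuous_of_finiteDimensional
  set O : Set S := {y | ∀ i, ‖(phat.2.1 + (ρi y).2.2) i‖ < σt i} with hO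
  have hOopen : IsOpen O := by
    have hOeq : O = ⋂ i, {y : S | ‖phat.2.1 i + (ρi y).2.2 i‖ < σt i} := by
      ext y
      simp only [hO, Set.mem_iInter, Set.mem_setOf_eq, Pi.add_apply]
    rw [hOeq]
    refine isOpen_iInter_of_finite fun i => ?_
    have h1 : Continuous fun y : S => (ρi y).2.2 i :=
      (continuous_apply i).comp (continuous_snd.comp (continuous_snd.comp hρicont))
    exact isOpen_lt ((continuous_const.add h1).norm) continuous_const
  have h0O : (0 : S) ∈ O := by
    intro i
    have h0 : ρi 0 = 0 := map_zero ρi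
    show ‖(phat.2.1 + (ρi (0:S)).2.2) i‖ < σt i
    rw [h0]
    show ‖phat.2.1 i + 0‖ < σt i
    rw [add_zero]
    exact hσt3 i
  obtain ⟨ε1, hε1pos, hball⟩ := Metric.isOpen_iff.mp hOopen 0 h0O
  have hRK : ∀ y : S, y ∈ O → Rmap y ∈ K := by
    intro y hy i
    exact ⟨hσt1 i, hσt2 i, (hy i).le⟩
  have hcont : Continuous fun y : S => Jf (Rmap y) := by
    simp only [hJf, hRmap]
    refine Continuous.add (hmcont.comp ?_) continuous_const
    have hq : Continuous fun y : S =>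
        ((xinit + (ρi y).1, ((ρi y).2.1, phat.2.1 + (ρi y).2.2)) :
          (EuclideanSpace ℝ (Fin nx)) × (Fin N → EuclideanSpace ℝ (Fin nx))
            × (Fin (N + 1) → EuclideanSpace ℝ (Fin nu))) := by
      refine Continuous.prodMk (continuous_const.add (continuous_fst.comp hρicont)) ?_
      refine Continuous.prodMk (continuous_fst.comp (continuous_snd.comp hρicont)) ?_
      exact continuous_const.add (continuous_snd.comp (continuous_snd.comp hρicont))
    exact (traj_continuous A B0 B1 ((Fin.last N) : ℕ)).comp hq
  obtain ⟨yM, hyMmem, hyM⟩ := (isCompact_closedBall (0 : S) (ε1 / 2)).exists_isMaxOn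
    ⟨0, Metric.mem_closedBall_self (by positivity)⟩ hcont.continuousOn
  set T' : ((Fin (N + 1) → EuclideanSpace ℝ (Fin nx)) ×
      (Fin (N + 1) → EuclideanSpace ℝ (Fin nu)) × (Fin (N + 1) → ℝ)) → S :=
    fun p => ⟨Tmap p, hmemS p⟩ with hT'
  have hCQ : ∀ y : S, ‖y‖ < ε1 / 2 → ∃ z ∈ K, T' z = y ∧ Jf z ≤ Jf (Rmap yM) := by
    intro y hy
    have hyO : y ∈ O := hball (by
      rw [Metric.mem_ball, dist_zero_right]
      linarith)
    refine ⟨Rmap y, hRK y hyO, Subtype.ext (hTR y), ?_⟩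
    exact hyM (by rw [Metric.mem_closedBall, dist_zero_right]; linarith)
  have hT'aff : ∀ z w, ∀ (a b : ℝ), a + b = 1 →
      T' (a • z + b • w) = a • T' z + b • T' w := by
    intro z w a b hab
    refine Subtype.ext ?_
    show Tmap (a • z + b • w) = a • Tmap z + b • Tmap w
    exact hTaff z w a b hab
  have hstarK : pstar ∈ K := hctrlstar
  have hT'star : T' pstar = 0 := Subtype.ext hTstar0
  have hopt : ∀ z ∈ K, T' z = 0 → Jf pstar ≤ Jf z := by
    intro z hz hTz
    have hTz0 : Tmap z = 0 := congrArg Subtype.val hTz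
    refine hmin z ⟨?_, hz, ?_, ?_⟩
    · intro i
      have hcomp : (fun i : Fin N => -z.1 i.succ + mulVecE A (z.1 i.castSucc)
          + mulVecE B0 (z.2.1 i.castSucc) + mulVecE B1 (z.2.1 i.succ)) = fun _ => 0 :=
        congrArg (fun q : WithLp 2 ((EuclideanSpace ℝ (Fin nx)) ×
          (WithLp 2 ((PiLp 2 fun _ : Fin N => EuclideanSpace ℝ (Fin nx)) ×
            (EuclideanSpace ℝ (Fin nG))))) => WithLp.ofLp q.snd.fst) hTz0
      have := congrFun hcomp i
      rw [← neg_add_eq_zero]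
      linear_combination (norm := abel) this
    · have hcomp : z.1 0 - xinit = 0 :=
        congrArg (fun q : WithLp 2 ((EuclideanSpace ℝ (Fin nx)) ×
          (WithLp 2 ((PiLp 2 fun _ : Fin N => EuclideanSpace ℝ (Fin nx)) ×
            (EuclideanSpace ℝ (Fin nG))))) => q.fst) hTz0
      exact sub_eq_zero.mp hcomp
    · exact congrArg (fun q : WithLp 2 ((EuclideanSpace ℝ (Fin nx)) ×
          (WithLp 2 ((PiLp 2 fun _ : Fin N => EuclideanSpace ℝ (Fin nx)) ×
            (EuclideanSpace ℝ (Fin nG))))) => q.snd.snd) hTz0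
  obtain ⟨lam, hlam⟩ := LCvxAux.lagrange_dual K hKconv Jf hJconv T' hT'aff pstar hstarK
    hT'star hopt (ε1 / 2) (Jf (Rmap yM)) (by positivity) hCQ
  refine ⟨fun i => (lam : WithLp 2 ((EuclideanSpace ℝ (Fin nx)) ×
      (WithLp 2 ((PiLp 2 fun _ : Fin N => EuclideanSpace ℝ (Fin nx)) ×
        (EuclideanSpace ℝ (Fin nG)))))).ofLp.2.ofLp.1 i,
    (lam : WithLp 2 ((EuclideanSpace ℝ (Fin nx)) ×
      (WithLp 2 ((PiLp 2 fun _ : Fin N => EuclideanSpace ℝ (Fin nx)) ×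
        (EuclideanSpace ℝ (Fin nG)))))).ofLp.1,
    (lam : WithLp 2 ((EuclideanSpace ℝ (Fin nx)) ×
      (WithLp 2 ((PiLp 2 fun _ : Fin N => EuclideanSpace ℝ (Fin nx)) ×
        (EuclideanSpace ℝ (Fin nG)))))).ofLp.2.ofLp.2, ?_⟩
  intro p hp
  have hmain := hlam p hp
  have hip : ∀ q, (inner ℝ lam (T' q) : ℝ)
      = (∑ i : Fin N, (inner ℝ ((lam : WithLp 2 ((EuclideanSpace ℝ (Fin nx)) ×
          (WithLp 2 ((PiLp 2 fun _ : Fin N => EuclideanSpace ℝ (Fin nx)) ×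
            (EuclideanSpace ℝ (Fin nG)))))).ofLp.2.ofLp.1 i)
          (-q.1 i.succ + mulVecE A (q.1 i.castSucc) + mulVecE B0 (q.2.1 i.castSucc)
            + mulVecE B1 (q.2.1 i.succ)) : ℝ))
        + (inner ℝ ((lam : WithLp 2 ((EuclideanSpace ℝ (Fin nx)) ×
          (WithLp 2 ((PiLp 2 fun _ : Fin N => EuclideanSpace ℝ (Fin nx)) ×
            (EuclideanSpace ℝ (Fin nG)))))).ofLp.1) (q.1 0 - xinit) : ℝ)
        + (inner ℝ ((lam : WithLp 2 ((EuclideanSpace ℝ (Fin nx)) ×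
          (WithLp 2 ((PiLp 2 fun _ : Fin N => EuclideanSpace ℝ (Fin nx)) ×
            (EuclideanSpace ℝ (Fin nG)))))).ofLp.2.ofLp.2)
          (mulVecE Gmat (q.1 (Fin.last N)) + g) : ℝ) := by
    intro q
    have hmid : (inner ℝ ((lam : WithLp 2 ((EuclideanSpace ℝ (Fin nx)) ×
          (WithLp 2 ((PiLp 2 fun _ : Fin N => EuclideanSpace ℝ (Fin nx)) ×
            (EuclideanSpace ℝ (Fin nG)))))).ofLp.2.ofLp.1) ((Tmap q).ofLp.2.ofLp.1) : ℝ)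
        = ∑ i : Fin N, (inner ℝ ((lam : WithLp 2 ((EuclideanSpace ℝ (Fin nx)) ×
          (WithLp 2 ((PiLp 2 fun _ : Fin N => EuclideanSpace ℝ (Fin nx)) ×
            (EuclideanSpace ℝ (Fin nG)))))).ofLp.2.ofLp.1 i)
            (-q.1 i.succ + mulVecE A (q.1 i.castSucc) + mulVecE B0 (q.2.1 i.castSucc)
              + mulVecE B1 (q.2.1 i.succ)) : ℝ) := PiLp.inner_apply _ _
    have hA : ((Tmap q).ofLp.1 : EuclideanSpace ℝ (Fin nx)) = q.1 0 - xinit := rfl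
    have hC : ((Tmap q).ofLp.2.ofLp.2 : EuclideanSpace ℝ (Fin nG))
        = mulVecE Gmat (q.1 (Fin.last N)) + g := rfl
    rw [Submodule.coe_inner, WithLp.prod_inner_apply, WithLp.prod_inner_apply, hmid, hA, hC]
    ring
  have hzero1 : (∑ i : Fin N, (inner ℝ ((lam : WithLp 2 ((EuclideanSpace ℝ (Fin nx)) ×
      (WithLp 2 ((PiLp 2 fun _ : Fin N => EuclideanSpace ℝ (Fin nx)) ×
        (EuclideanSpace ℝ (Fin nG)))))).ofLp.2.ofLp.1 i)
      (-pstar.1 i.succ + mulVecE A (pstar.1 i.castSucc) + mulVecE B0 (pstar.2.1 i.castSucc)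
        + mulVecE B1 (pstar.2.1 i.succ)) : ℝ)) = 0 := by
    refine Finset.sum_eq_zero fun i _ => ?_
    rw [hstarzero i]
    exact inner_zero_right _
  have hzero2 : (inner ℝ ((lam : WithLp 2 ((EuclideanSpace ℝ (Fin nx)) ×
      (WithLp 2 ((PiLp 2 fun _ : Fin N => EuclideanSpace ℝ (Fin nx)) ×
        (EuclideanSpace ℝ (Fin nG)))))).ofLp.1) (pstar.1 0 - xinit) : ℝ) = 0 := by
    rw [sub_eq_zero_of_eq hx0star]
    exact inner_zero_right _
  have hzero3 : (inner ℝ ((lam : WithLp 2 ((EuclideanSpace ℝ (Fin nx)) ×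
      (WithLp 2 ((PiLp 2 fun _ : Fin N => EuclideanSpace ℝ (Fin nx)) ×
        (EuclideanSpace ℝ (Fin nG)))))).ofLp.2.ofLp.2)
      (mulVecE Gmat (pstar.1 (Fin.last N)) + g) : ℝ) = 0 := by
    rw [htermstar]
    exact inner_zero_right _
  have hipp := hip p
  beta_reduce
  rw [hzero1, hzero2, hzero3]
  linarith [hmain, hipp]
end

section
/- Let M ∈ ℝ^{n_x×n_u}, η ∈ ℝ^{n_x}, and σ ∈ ℝ with 0 < ρ_min ≤ σ ≤ ρ_max. Suppose u* ∈ ℝ^{n_u} minimizes the linear function u ↦ ⟨η, M u⟩ over the ball V(σ) = {u ∈ ℝ^{n_u} : ‖u‖ ≤ σ}. If Mᵀη ≠ 0, then ‖u*‖ = σ and hence ρ_min ≤ ‖u*‖ ≤ ρ_max, i.e., LCvx holds at that vertex. (Proposition giving sufficient dual conditions for LCvx at a vertex: taking M = B₀ for i = 1, M = B₁ for i = N+1, and M = B₀ + A B₁ for interior vertices, the condition Mᵀη_i ≠ 0 guarantees LCvx at vertex i.) -/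
open RealInnerProductSpace Matrix

lemma inner_mulVecE {k n : ℕ} (M : Matrix (Fin k) (Fin n) ℝ)
    (η : EuclideanSpace ℝ (Fin k)) (u : EuclideanSpace ℝ (Fin n)) :
    ⟪η, mulVecE M u⟫ = ⟪mulVecE Mᵀ η, u⟫ := by
  simp only [mulVecE, PiLp.inner_apply, RCLike.inner_apply, conj_trivial,
    Matrix.mulVec, dotProduct, Matrix.transpose_apply, Finset.mul_sum,
    Finset.sum_mul]
  rw [Finset.sum_comm]
  congr 1; ext j; congr 1; ext i; ring

/-- Sufficient dual condition for LCvx at a vertex: if `u*` minimizes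
`u ↦ ⟨η, M u⟩` over the ball `V(σ) = {‖u‖ ≤ σ}` with `ρ_min ≤ σ ≤ ρ_max` and
`Mᵀη ≠ 0`, then `‖u*‖ = σ` and hence `ρ_min ≤ ‖u*‖ ≤ ρ_max`. -/
theorem stmt_9 (nx nu : ℕ) (M : Matrix (Fin nx) (Fin nu) ℝ)
    (η : EuclideanSpace ℝ (Fin nx)) (σ ρmin ρmax : ℝ)
    (h0 : 0 < ρmin) (h1 : ρmin ≤ σ) (h2 : σ ≤ ρmax)
    (ustar : EuclideanSpace ℝ (Fin nu)) (hfeas : ‖ustar‖ ≤ σ)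
    (hmin : ∀ u : EuclideanSpace ℝ (Fin nu), ‖u‖ ≤ σ →
      ⟪η, mulVecE M ustar⟫ ≤ ⟪η, mulVecE M u⟫)
    (hMη : mulVecE Mᵀ η ≠ 0) :
    ‖ustar‖ = σ ∧ ρmin ≤ ‖ustar‖ ∧ ‖ustar‖ ≤ ρmax := by
  set w : EuclideanSpace ℝ (Fin nu) := mulVecE Mᵀ η with hw
  have hwpos : 0 < ‖w‖ := norm_pos_iff.mpr hMη
  have hσpos : 0 < σ := lt_of_lt_of_le h0 h1
  set u0 : EuclideanSpace ℝ (Fin nu) := (-(σ / ‖w‖)) • w with hu0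
  have hu0norm : ‖u0‖ = σ := by
    rw [hu0, norm_smul]
    simp [abs_of_pos (div_pos hσpos hwpos), div_mul_cancel₀, hwpos.ne', hσpos.le]
  have hkey := hmin u0 (le_of_eq hu0norm)
  rw [inner_mulVecE, inner_mulVecE, ← hw] at hkey
  have hru0 : ⟪w, u0⟫ = -(σ * ‖w‖) := by
    rw [hu0, real_inner_smul_right, real_inner_self_eq_norm_sq]
    field_simp
  have hcs : -(‖w‖ * ‖ustar‖) ≤ ⟪w, ustar⟫ := neg_le_of_abs_le (abs_real_inner_le_norm w ustar)
  have : -(‖w‖ * ‖ustar‖) ≤ -(σ * ‖w‖) := le_trans hcs (hkey.trans_eq hru0)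
  have hge : σ ≤ ‖ustar‖ := by
    have := neg_le_neg_iff.mp this
    nlinarith
  have heq : ‖ustar‖ = σ := le_antisymm hfeas hge
  exact ⟨heq, heq ▸ h1, heq ▸ h2⟩
end

section
/- Fix N ≥ 1, n_x, n_u ≥ 1, and reals 0 < ρ_min ≤ ρ̃ ≤ ρ_max. Let u₁, …, u_{N+1} ∈ ℝ^{n_u} satisfy the rate constraint ‖u_{i+1} − u_i‖ ≤ 2√(ρ̃² − ρ_min²) for every i ∈ {1, …, N}, and suppose the set of vertices violating the perturbed bounds, S = {i ∈ {1, …, N+1} : ¬(ρ̃ ≤ ‖u_i‖ ≤ ρ_max)}, has cardinality at most n_x + 1. Then the set of edges along which LCvx is violated, {i ∈ {1, …, N} : ∃ t ∈ [0, 1], ¬(ρ_min ≤ ‖(1 − t)·u_i + t·u_{i+1}‖ ≤ ρ_max)}, has cardinality at most 2n_x + 2. (Deterministic core of the paper's proposition on the feasible interval: if at most n_x + 1 vertices violate the perturbed nonconvex constraint and the rate constraints hold, then the piecewise linear control violates LCvx along at most 2n_x + 2 edges.) -/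
open scoped Classical

lemma edge_good {E : Type*} [NormedAddCommGroup E] [InnerProductSpace ℝ E]
    (a b : E) (ρmin ρt ρmax : ℝ) (h0 : 0 < ρmin) (h1 : ρmin ≤ ρt)
    (ha1 : ρt ≤ ‖a‖) (ha2 : ‖a‖ ≤ ρmax) (hb1 : ρt ≤ ‖b‖) (hb2 : ‖b‖ ≤ ρmax)
    (hr : ‖b - a‖ ≤ 2 * Real.sqrt (ρt ^ 2 - ρmin ^ 2))
    (t : ℝ) (ht0 : 0 ≤ t) (ht1 : t ≤ 1) :
    ρmin ≤ ‖(1 - t) • a + t • b‖ ∧ ‖(1 - t) • a + t • b‖ ≤ ρmax := by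
  have hΔ : (0:ℝ) ≤ ρt ^ 2 - ρmin ^ 2 := by nlinarith
  have hsq : ‖b - a‖ ^ 2 ≤ 4 * (ρt ^ 2 - ρmin ^ 2) := by
    have h2s : (2 * Real.sqrt (ρt ^ 2 - ρmin ^ 2)) ^ 2 = 4 * (ρt ^ 2 - ρmin ^ 2) := by
      rw [mul_pow, Real.sq_sqrt hΔ]; ring
    nlinarith [norm_nonneg (b - a), Real.sqrt_nonneg (ρt ^ 2 - ρmin ^ 2)]
  set x := (1 - t) • a + t • b with hx
  -- key identity: ‖x‖² = (1-t)‖a‖² + t‖b‖² - t(1-t)‖b-a‖²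
  have hid : ‖x‖ ^ 2 = (1 - t) * ‖a‖ ^ 2 + t * ‖b‖ ^ 2 - t * (1 - t) * ‖b - a‖ ^ 2 := by
    have e1 : ‖x‖ ^ 2 = inner ℝ x x := (real_inner_self_eq_norm_sq x).symm
    have e2 : ‖a‖ ^ 2 = inner ℝ a a := (real_inner_self_eq_norm_sq a).symm
    have e3 : ‖b‖ ^ 2 = inner ℝ b b := (real_inner_self_eq_norm_sq b).symm
    have e4 : ‖b - a‖ ^ 2 = inner ℝ (b - a) (b - a) := (real_inner_self_eq_norm_sq _).symm
    rw [e1, e2, e3, e4, hx]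
    simp only [inner_add_add_self, inner_sub_sub_self, real_inner_smul_left,
      real_inner_smul_right, real_inner_comm a b]
    ring
  constructor
  · have hlow : ρmin ^ 2 ≤ ‖x‖ ^ 2 := by
      rw [hid]
      have haa : ρt ^ 2 ≤ ‖a‖ ^ 2 := by nlinarith
      have hbb : ρt ^ 2 ≤ ‖b‖ ^ 2 := by nlinarith
      have htt0 : (0:ℝ) ≤ t * (1 - t) := mul_nonneg ht0 (by linarith)
      have h14 : (0:ℝ) ≤ 1 / 4 - t * (1 - t) := by nlinarith [sq_nonneg (2 * t - 1)]
      nlinarith [mul_le_mul_of_nonneg_left hsq htt0, mul_nonneg h14 hΔ]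
    nlinarith [norm_nonneg x]
  · calc ‖x‖ ≤ ‖(1 - t) • a‖ + ‖t • b‖ := norm_add_le _ _
      _ = (1 - t) * ‖a‖ + t * ‖b‖ := by
          rw [norm_smul, norm_smul, Real.norm_of_nonneg (by linarith),
            Real.norm_of_nonneg ht0]
      _ ≤ (1 - t) * ρmax + t * ρmax := by
          have := sub_nonneg.mpr ht1
          gcongr
      _ = ρmax := by ring

/-- Deterministic core of the feasible-interval proposition: if the piecewise
linear controls satisfy the rate constraint `‖u_{i+1} − u_i‖ ≤ 2√(ρ̃² − ρ_min²)`
on every edge and the perturbed bounds `ρ̃ ≤ ‖uᵢ‖ ≤ ρ_max` are violated at no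
more than `n_x + 1` vertices, then LCvx (`ρ_min ≤ ‖u(t)‖ ≤ ρ_max` along the
interpolated edge) is violated along at most `2n_x + 2` edges. -/
theorem stmt_15 (N nx nu : ℕ) (hN : 1 ≤ N) (hnx : 1 ≤ nx) (hnu : 1 ≤ nu)
    (ρmin ρt ρmax : ℝ) (h0 : 0 < ρmin) (h1 : ρmin ≤ ρt) (h2 : ρt ≤ ρmax)
    (u : ℕ → EuclideanSpace ℝ (Fin nu))
    (hrate : ∀ i ∈ Finset.Icc 1 N,
      ‖u (i + 1) - u i‖ ≤ 2 * Real.sqrt (ρt ^ 2 - ρmin ^ 2))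
    (hS : ((Finset.Icc 1 (N + 1)).filter
      (fun i => ¬(ρt ≤ ‖u i‖ ∧ ‖u i‖ ≤ ρmax))).card ≤ nx + 1) :
    ((Finset.Icc 1 N).filter (fun i => ∃ t ∈ Set.Icc (0 : ℝ) 1,
      ¬(ρmin ≤ ‖(1 - t) • u i + t • u (i + 1)‖ ∧
        ‖(1 - t) • u i + t • u (i + 1)‖ ≤ ρmax))).card ≤ 2 * nx + 2 := by
  set S := (Finset.Icc 1 (N + 1)).filter (fun i => ¬(ρt ≤ ‖u i‖ ∧ ‖u i‖ ≤ ρmax)) with hSdef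
  set V := (Finset.Icc 1 N).filter (fun i => ∃ t ∈ Set.Icc (0 : ℝ) 1,
      ¬(ρmin ≤ ‖(1 - t) • u i + t • u (i + 1)‖ ∧
        ‖(1 - t) • u i + t • u (i + 1)‖ ≤ ρmax)) with hVdef
  have hsub : V ⊆ S ∪ S.image (fun j => j - 1) := by
    intro i hi
    rw [hVdef, Finset.mem_filter] at hi
    obtain ⟨hiI, t, ht, hviol⟩ := hi
    rw [Finset.mem_Icc] at hiI
    by_cases hgi : ρt ≤ ‖u i‖ ∧ ‖u i‖ ≤ ρmax
    · by_cases hgi1 : ρt ≤ ‖u (i + 1)‖ ∧ ‖u (i + 1)‖ ≤ ρmax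
      · exact absurd (edge_good (u i) (u (i + 1)) ρmin ρt ρmax h0 h1 hgi.1 hgi.2
          hgi1.1 hgi1.2 (hrate i (Finset.mem_Icc.mpr hiI)) t ht.1 ht.2) hviol
      · apply Finset.mem_union_right
        apply Finset.mem_image.mpr
        exact ⟨i + 1, Finset.mem_filter.mpr ⟨Finset.mem_Icc.mpr ⟨by omega, by omega⟩, hgi1⟩,
          by omega⟩
    · exact Finset.mem_union_left _ (Finset.mem_filter.mpr
        ⟨Finset.mem_Icc.mpr ⟨hiI.1, by omega⟩, hgi⟩)
  calc V.card ≤ (S ∪ S.image (fun j => j - 1)).card := Finset.card_le_card hsub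
    _ ≤ S.card + (S.image (fun j => j - 1)).card := Finset.card_union_le _ _
    _ ≤ S.card + S.card := by
        have := Finset.card_image_le (s := S) (f := fun j => j - 1)
        omega
    _ ≤ 2 * nx + 2 := by omega
end
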